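/- Let R be a Noetherian domain, A a subring of B containing R where B is a finitely generated R-algebra, and suppose A_b is a finitely generated R-algebra for some nonzero b ∈ A. If A_𝔪 is a finitely generated R_𝔪-algebra for every maximal ideal 𝔪 of R, then A is a finitely generated R-algebra. -/

import Mathlib

section OnodaKey

open Ideal

variable {R A : Type*} [CommRing R] [CommRing A] [IsDomain A] [Algebra R A]

/-- Key uniformization lemma: if `A₀` is a Noetherian subalgebra of the domain `A`
containing `b ≠ 0`, every element of `A` is pushed into `A₀` by a power of `b`, and every
element of `A` is pushed into `A₀` by some element of the submonoid `S` of `R`, then a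
single element of `S` works (with varying powers). -/
theorem onoda_key (S : Submonoid R) (A₀ : Subalgebra R A) (hN : IsNoetherianRing A₀)
    (b : A) (hbA : b ∈ A₀) (hb : b ≠ 0)
    (habs : ∀ a : A, ∃ n : ℕ, b ^ n * a ∈ A₀)
    (hS : ∀ a : A, ∃ s ∈ S, algebraMap R A s * a ∈ A₀) :
    ∃ f ∈ S, ∀ a : A, ∃ m : ℕ, algebraMap R A f ^ m * a ∈ A₀ := by
  classical
  set b₀ : A₀ := ⟨b, hbA⟩ with hb₀
  obtain ⟨D, hDinf, hDprim⟩ := Submodule.isLasker A₀ A₀ (Ideal.span {b₀})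
  set T : Finset (Ideal A₀) := D.filter (fun Q => ∃ s ∈ S, algebraMap R A₀ s ∈ Q.radical)
    with hT
  have hTsel : ∀ Q ∈ T, ∃ s ∈ S, algebraMap R A₀ s ∈ Q.radical :=
    fun Q hQ => (Finset.mem_filter.mp hQ).2
  choose sel hsel1 hsel2 using hTsel
  set f : R := ∏ Q ∈ T.attach, sel Q.1 Q.2 with hf
  have hfS : f ∈ S := prod_mem fun Q _ => hsel1 Q.1 Q.2
  have hfQ : ∀ Q ∈ T, algebraMap R A₀ f ∈ Q.radical := by
    intro Q hQ
    have h1 : algebraMap R A₀ f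
        = (∏ P ∈ T.attach.erase ⟨Q, hQ⟩, algebraMap R A₀ (sel P.1 P.2))
            * algebraMap R A₀ (sel Q hQ) := by
      rw [hf, ← Finset.prod_erase_mul _ _ (Finset.mem_attach T ⟨Q, hQ⟩), _root_.map_mul,
        map_prod]
    rw [h1]
    exact Ideal.mul_mem_left _ _ (hsel2 Q hQ)
  -- Step 1 : the case of one power of b
  have step1 : ∀ a : A, b * a ∈ A₀ → ∃ m : ℕ, algebraMap R A f ^ m * a ∈ A₀ := by
    intro a ha
    set x : A₀ := ⟨b * a, ha⟩ with hx
    have hQm : ∀ Q ∈ D, ∃ m : ℕ, algebraMap R A₀ f ^ m * x ∈ Q := by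
      intro Q hQ
      by_cases hxQ : x ∈ Q
      · exact ⟨0, by simpa using hxQ⟩
      · obtain ⟨s, hsS, hsa⟩ := hS a
        have hxs : x * algebraMap R A₀ s ∈ Q := by
          have hxseq : x * algebraMap R A₀ s = b₀ * ⟨algebraMap R A s * a, hsa⟩ := by
            apply Subtype.ext
            push_cast [hx, hb₀]
            ring
          have hbQ : b₀ * (⟨algebraMap R A s * a, hsa⟩ : A₀) ∈ Ideal.span {b₀} :=
            Ideal.mul_mem_right _ _ (Ideal.mem_span_singleton_self b₀)
          have hle : Ideal.span {b₀} ≤ Q := by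
            rw [← hDinf]
            exact Finset.inf_le hQ
          rw [hxseq]
          exact hle hbQ
        have hsrad : algebraMap R A₀ s ∈ Ideal.radical Q := by
          rcases (Ideal.isPrimary_iff.mp (hDprim hQ)).2 hxs with h | h
          · exact absurd h hxQ
          · exact h
        have hQT : Q ∈ T := Finset.mem_filter.mpr ⟨hQ, ⟨s, hsS, hsrad⟩⟩
        obtain ⟨m, hm⟩ := Ideal.mem_radical_iff.mp (hfQ Q hQT)
        exact ⟨m, Ideal.mul_mem_right _ _ hm⟩
    choose g hg using hQm
    set M : ℕ := D.attach.sup (fun Q => g Q.1 Q.2) with hM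
    have hxmem : algebraMap R A₀ f ^ M * x ∈ Ideal.span {b₀} := by
      rw [← hDinf]
      rw [Submodule.mem_finsetInf]
      intro Q hQ
      have hle : g Q hQ ≤ M :=
        Finset.le_sup (f := fun P : {x // x ∈ D} => g P.1 P.2) (Finset.mem_attach D ⟨Q, hQ⟩)
      obtain ⟨k, hk⟩ := Nat.exists_eq_add_of_le hle
      have : algebraMap R A₀ f ^ M * x
          = algebraMap R A₀ f ^ k * (algebraMap R A₀ f ^ (g Q hQ) * x) := by
        rw [hk, pow_add]; ring
      rw [this]
      exact Ideal.mul_mem_left _ _ (hg Q hQ)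
    obtain ⟨z, hz⟩ := Ideal.mem_span_singleton'.mp hxmem
    refine ⟨M, ?_⟩
    have hzA : (z : A) * b = algebraMap R A f ^ M * (b * a) := by
      have := congrArg (Subtype.val) hz
      push_cast at this
      exact this
    have hcancel : b * ((z : A) - algebraMap R A f ^ M * a) = 0 := by
      rw [mul_sub, sub_eq_zero]
      rw [mul_comm b (z : A), hzA]; ring
    rcases mul_eq_zero.mp hcancel with h | h
    · exact absurd h hb
    · have : algebraMap R A f ^ M * a = (z : A) := by linear_combination -h
      rw [this]; exact z.2
  -- Step 2 : induction on the power of b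
  have step2 : ∀ (n : ℕ) (a : A), b ^ n * a ∈ A₀ → ∃ m : ℕ, algebraMap R A f ^ m * a ∈ A₀ := by
    intro n
    induction n with
    | zero => intro a ha; exact ⟨0, by simpa using ha⟩
    | succ n ih =>
      intro a ha
      obtain ⟨m₁, hm₁⟩ := step1 (b ^ n * a) (by rw [← mul_assoc, ← pow_succ']; exact ha)
      obtain ⟨m₂, hm₂⟩ := ih (algebraMap R A f ^ m₁ * a)
        (by rw [show b ^ n * (algebraMap R A f ^ m₁ * a) = algebraMap R A f ^ m₁ * (b ^ n * a) by
              ring]; exact hm₁)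
      exact ⟨m₂ + m₁, by rw [pow_add, mul_assoc]; exact hm₂⟩
  exact ⟨f, hfS, fun a => (habs a).elim fun n hn => step2 n a hn⟩

end OnodaKey

section OnodaStepA

variable {R A : Type*} [CommRing R] [CommRing A] [IsDomain A] [Algebra R A]

theorem onoda_stepA (b : A) (hb : b ≠ 0) (h : Algebra.FiniteType R (Localization.Away b)) :
    ∃ A₁ : Subalgebra R A, A₁.FG ∧ b ∈ A₁ ∧ ∀ a : A, ∃ n : ℕ, b ^ n * a ∈ A₁ := by
  classical
  obtain ⟨s, hs⟩ := h.1
  set φ := algebraMap A (Localization.Away b) with hφ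
  have hsurj : ∀ t : Localization.Away b,
      ∃ x : A × (Submonoid.powers b), t * φ x.2 = φ x.1 :=
    IsLocalization.surj (Submonoid.powers b)
  choose num hnum using hsurj
  set G : Finset A := insert b (s.image (fun t => (num t).1)) with hG
  refine ⟨Algebra.adjoin R (G : Set A), ⟨G, rfl⟩, ?_, ?_⟩
  · exact Algebra.subset_adjoin (by simp [hG])
  set A₁ : Subalgebra R A := Algebra.adjoin R (G : Set A) with hA₁
  have hbA₁ : b ∈ A₁ := Algebra.subset_adjoin (by simp [hG])
  -- the subalgebra of elements of L which `b`-powers push into A₁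
  set Csr : Subsemiring (Localization.Away b) :=
    { carrier := {t | ∃ (n : ℕ) (y : A), y ∈ A₁ ∧ t * φ b ^ n = φ y}
      mul_mem' := by
        rintro t₁ t₂ ⟨n₁, y₁, hy₁, h₁⟩ ⟨n₂, y₂, hy₂, h₂⟩
        refine ⟨n₁ + n₂, y₁ * y₂, mul_mem hy₁ hy₂, ?_⟩
        rw [pow_add, map_mul, show t₁ * t₂ * (φ b ^ n₁ * φ b ^ n₂)
          = (t₁ * φ b ^ n₁) * (t₂ * φ b ^ n₂) by ring, h₁, h₂]
      one_mem' := ⟨0, 1, one_mem _, by simp⟩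
      add_mem' := by
        rintro t₁ t₂ ⟨n₁, y₁, hy₁, h₁⟩ ⟨n₂, y₂, hy₂, h₂⟩
        refine ⟨n₁ + n₂, y₁ * b ^ n₂ + y₂ * b ^ n₁,
          add_mem (mul_mem hy₁ (pow_mem hbA₁ _)) (mul_mem hy₂ (pow_mem hbA₁ _)), ?_⟩
        rw [map_add, _root_.map_mul, _root_.map_mul, map_pow, map_pow, pow_add,
          show (t₁ + t₂) * (φ b ^ n₁ * φ b ^ n₂)
            = (t₁ * φ b ^ n₁) * φ b ^ n₂ + (t₂ * φ b ^ n₂) * φ b ^ n₁ by ring, h₁, h₂]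
      zero_mem' := ⟨0, 0, zero_mem _, by simp⟩ }
  set C : Subalgebra R (Localization.Away b) :=
    { Csr with
      algebraMap_mem' := fun r =>
        ⟨0, algebraMap R A r, Subalgebra.algebraMap_mem _ r, by
          rw [pow_zero, mul_one, ← IsScalarTower.algebraMap_apply]⟩ }
  have hsC : (s : Set (Localization.Away b)) ⊆ C := by
    intro t ht
    obtain ⟨n, hn⟩ := (num t).2.2
    refine ⟨n, (num t).1, Algebra.subset_adjoin (by simp [hG]; right; exact ⟨t, ht, rfl⟩), ?_⟩
    rw [← map_pow, show b ^ n = ((num t).2 : A) from hn]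
    exact hnum t
  have hCtop : (⊤ : Subalgebra R (Localization.Away b)) ≤ C := by
    rw [← hs]; exact Algebra.adjoin_le hsC
  have htop : ∀ t : Localization.Away b, t ∈ C := fun t => hCtop Algebra.mem_top
  intro a
  obtain ⟨n, y, hy, hEq⟩ := htop (φ a)
  have : φ (b ^ n * a - y) = 0 := by
    rw [map_sub, _root_.map_mul, map_pow, sub_eq_zero, mul_comm (φ b ^ n) (φ a)]
    exact hEq
  obtain ⟨⟨c, hc⟩, hc0⟩ := (IsLocalization.map_eq_zero_iff (Submonoid.powers b) (Localization.Away b) _).mp this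
  obtain ⟨k, hk⟩ := hc
  refine ⟨n, ?_⟩
  have : b ^ k * (b ^ n * a - y) = 0 := by
    rw [show b ^ k = c from hk]; exact hc0
  rcases mul_eq_zero.mp this with hcase | hcase
  · exact absurd hcase (pow_ne_zero _ hb)
  · have : b ^ n * a = y := by linear_combination hcase
    rw [this]; exact hy

end OnodaStepA

section OnodaStepB

variable {R A : Type*} [CommRing R] [IsDomain R] [CommRing A] [IsDomain A] [Algebra R A]

theorem onoda_stepB (hRA : Function.Injective (algebraMap R A))
    (𝔪 : Ideal R) (h𝔪 : 𝔪.IsMaximal)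
    (hft :
      letI := h𝔪.isPrime
      letI : Algebra (Localization.AtPrime 𝔪)
          (Localization (Submonoid.map (algebraMap R A) 𝔪.primeCompl)) :=
        (IsLocalization.map
          (Localization (Submonoid.map (algebraMap R A) 𝔪.primeCompl))
          (algebraMap R A) (Submonoid.le_comap_map 𝔪.primeCompl) :
            Localization.AtPrime 𝔪 →+*
              Localization (Submonoid.map (algebraMap R A) 𝔪.primeCompl)).toAlgebra
      Algebra.FiniteType (Localization.AtPrime 𝔪)
        (Localization (Submonoid.map (algebraMap R A) 𝔪.primeCompl))) :
    ∃ H : Subalgebra R A, H.FG ∧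
      ∀ a : A, ∃ s ∈ 𝔪.primeCompl, algebraMap R A s * a ∈ H := by
  classical
  letI := h𝔪.isPrime
  set T : Submonoid A := Submonoid.map (algebraMap R A) 𝔪.primeCompl with hT
  set L := Localization T with hL
  letI instKL : Algebra (Localization.AtPrime 𝔪) L :=
    (IsLocalization.map L (algebraMap R A) (Submonoid.le_comap_map 𝔪.primeCompl) :
      Localization.AtPrime 𝔪 →+* L).toAlgebra
  obtain ⟨gen, hgen⟩ := hft.1
  set ψ := algebraMap A L with hψ
  have hsurj : ∀ t : L, ∃ x : A × T, t * ψ x.2 = ψ x.1 := IsLocalization.surj T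
  choose num hnum using hsurj
  set G : Finset A := gen.image (fun t => (num t).1) with hG
  refine ⟨Algebra.adjoin R (G : Set A), ⟨G, rfl⟩, ?_⟩
  set H : Subalgebra R A := Algebra.adjoin R (G : Set A) with hH
  -- the K-subalgebra of L of elements pushed into H by a denominator from 𝔪.primeCompl
  set Csr : Subsemiring L :=
    { carrier := {t | ∃ s ∈ 𝔪.primeCompl, ∃ y ∈ H, t * ψ (algebraMap R A s) = ψ y}
      mul_mem' := by
        rintro t₁ t₂ ⟨s₁, hs₁, y₁, hy₁, h₁⟩ ⟨s₂, hs₂, y₂, hy₂, h₂⟩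
        refine ⟨s₁ * s₂, mul_mem hs₁ hs₂, y₁ * y₂, mul_mem hy₁ hy₂, ?_⟩
        rw [_root_.map_mul, _root_.map_mul, _root_.map_mul,
          show t₁ * t₂ * (ψ (algebraMap R A s₁) * ψ (algebraMap R A s₂))
            = (t₁ * ψ (algebraMap R A s₁)) * (t₂ * ψ (algebraMap R A s₂)) by ring, h₁, h₂]
      one_mem' := ⟨1, one_mem _, 1, one_mem _, by simp⟩
      add_mem' := by
        rintro t₁ t₂ ⟨s₁, hs₁, y₁, hy₁, h₁⟩ ⟨s₂, hs₂, y₂, hy₂, h₂⟩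
        refine ⟨s₁ * s₂, mul_mem hs₁ hs₂,
          y₁ * algebraMap R A s₂ + y₂ * algebraMap R A s₁,
          add_mem (mul_mem hy₁ (Subalgebra.algebraMap_mem _ _))
            (mul_mem hy₂ (Subalgebra.algebraMap_mem _ _)), ?_⟩
        rw [map_add, _root_.map_mul, _root_.map_mul, _root_.map_mul, _root_.map_mul,
          show (t₁ + t₂) * (ψ (algebraMap R A s₁) * ψ (algebraMap R A s₂))
            = (t₁ * ψ (algebraMap R A s₁)) * ψ (algebraMap R A s₂)
              + (t₂ * ψ (algebraMap R A s₂)) * ψ (algebraMap R A s₁) by ring, h₁, h₂]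
      zero_mem' := ⟨1, one_mem _, 0, zero_mem _, by simp⟩ }
  set C : Subalgebra (Localization.AtPrime 𝔪) L :=
    { Csr with
      algebraMap_mem' := by
        intro r
        obtain ⟨⟨x, u⟩, hxu⟩ := IsLocalization.mk'_surjective 𝔪.primeCompl r
        refine ⟨u, u.2, algebraMap R A x, Subalgebra.algebraMap_mem _ _, ?_⟩
        have halg : algebraMap (Localization.AtPrime 𝔪) L r
            = IsLocalization.mk' L (algebraMap R A x)
                (⟨algebraMap R A u, Submonoid.mem_map_of_mem _ u.2⟩ : T) := by
          rw [RingHom.algebraMap_toAlgebra, ← hxu, IsLocalization.map_mk']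
        rw [halg]
        exact IsLocalization.mk'_spec L _ _
      }
  have hgenC : (gen : Set L) ⊆ C := by
    intro t ht
    obtain ⟨s₀, hs₀, hs₀eq⟩ := (num t).2.2
    refine ⟨s₀, hs₀, (num t).1,
      Algebra.subset_adjoin (by simp [hG]; exact ⟨t, ht, rfl⟩), ?_⟩
    rw [show algebraMap R A s₀ = ((num t).2 : A) from hs₀eq]
    exact hnum t
  have hCtop : (⊤ : Subalgebra (Localization.AtPrime 𝔪) L) ≤ C := by
    rw [← hgen]; exact Algebra.adjoin_le hgenC
  intro a
  obtain ⟨s, hs, y, hy, hEq⟩ := hCtop (Algebra.mem_top (x := ψ a))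
  have hker : ψ (algebraMap R A s * a - y) = 0 := by
    rw [map_sub, _root_.map_mul, sub_eq_zero, mul_comm (ψ (algebraMap R A s)) (ψ a)]
    exact hEq
  obtain ⟨⟨c, hc⟩, hc0⟩ := (IsLocalization.map_eq_zero_iff T L _).mp hker
  obtain ⟨s', hs', hs'c⟩ := hc
  have hc0' : algebraMap R A s' * (algebraMap R A s * a - y) = 0 := by
    rw [hs'c]; exact hc0
  have hs'ne : algebraMap R A s' ≠ 0 := by
    intro h0
    exact hs' (by rw [show s' = 0 from hRA (by rw [h0, map_zero])]; exact 𝔪.zero_mem)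
  rcases mul_eq_zero.mp hc0' with hcase | hcase
  · exact absurd hcase hs'ne
  · refine ⟨s, hs, ?_⟩
    have : algebraMap R A s * a = y := by linear_combination hcase
    rw [this]; exact hy

end OnodaStepB


/-- Onoda's theorem: let `R` be a Noetherian domain and `A` an overdomain of `R` contained
in a finitely generated `R`-algebra `B`, such that `A_b` is a finitely generated
`R`-algebra for some nonzero `b ∈ A`. If `A_𝔪 = A ⊗_R R_𝔪` is a finitely generated
`R_𝔪`-algebra for every maximal ideal `𝔪` of `R`, then `A` is a finitely generated
`R`-algebra. -/
theorem onoda_finite_generation {R A B : Type*} [CommRing R] [IsDomain R]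
    [IsNoetherianRing R] [CommRing A] [IsDomain A] [Algebra R A]
    (hRA : Function.Injective (algebraMap R A))
    [CommRing B] [Algebra R B] [Algebra A B] [IsScalarTower R A B]
    (hAB : Function.Injective (algebraMap A B)) (hB : Algebra.FiniteType R B)
    (b : A) (hb : b ≠ 0) (hAb : Algebra.FiniteType R (Localization.Away b))
    (hloc : ∀ (𝔪 : Ideal R) (h𝔪 : 𝔪.IsMaximal),
      letI := h𝔪.isPrime
      letI : Algebra (Localization.AtPrime 𝔪)
          (Localization (Submonoid.map (algebraMap R A) 𝔪.primeCompl)) :=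
        (IsLocalization.map
          (Localization (Submonoid.map (algebraMap R A) 𝔪.primeCompl))
          (algebraMap R A) (Submonoid.le_comap_map 𝔪.primeCompl) :
            Localization.AtPrime 𝔪 →+*
              Localization (Submonoid.map (algebraMap R A) 𝔪.primeCompl)).toAlgebra
      Algebra.FiniteType (Localization.AtPrime 𝔪)
        (Localization (Submonoid.map (algebraMap R A) 𝔪.primeCompl))) :
    Algebra.FiniteType R A := by
  classical
  obtain ⟨A₁, hA₁fg, hbA₁, hA₁⟩ := onoda_stepA b hb hAb
  -- the ideal of uniform denominators
  set J : Ideal R :=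
    { carrier := {f : R | ∃ A₀ : Subalgebra R A, A₀.FG ∧
        ∀ a : A, ∃ m : ℕ, algebraMap R A f ^ m * a ∈ A₀}
      add_mem' := by
        rintro f g ⟨Af, hAf, hf⟩ ⟨Ag, hAg, hg⟩
        refine ⟨Af ⊔ Ag, ?_, ?_⟩
        · obtain ⟨sf, hsf⟩ := hAf
          obtain ⟨sg, hsg⟩ := hAg
          exact ⟨sf ∪ sg, by rw [Finset.coe_union, Algebra.adjoin_union, hsf, hsg]⟩
        · intro a
          obtain ⟨mf, hmf⟩ := hf a
          obtain ⟨mg, hmg⟩ := hg a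
          refine ⟨mf + mg, ?_⟩
          rw [map_add, add_pow]
          rw [Finset.sum_mul]
          refine Subalgebra.sum_mem _ ?_
          intro k hk
          rcases le_or_gt mf k with hcase | hcase
          · have : algebraMap R A f ^ k * algebraMap R A g ^ (mf + mg - k)
                * (mf + mg).choose k * a
                = (algebraMap R A f ^ (k - mf) * algebraMap R A g ^ (mf + mg - k)
                    * (mf + mg).choose k) * (algebraMap R A f ^ mf * a) := by
              rw [show algebraMap R A f ^ k
                  = algebraMap R A f ^ (k - mf) * algebraMap R A f ^ mf by
                rw [← pow_add, Nat.sub_add_cancel hcase]]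
              ring
            rw [this]
            exact mul_mem (SetLike.le_def.mp le_sup_left (by
              exact Subalgebra.mul_mem _ (Subalgebra.mul_mem _
                (Subalgebra.pow_mem _ (Subalgebra.algebraMap_mem _ _) _)
                (Subalgebra.pow_mem _ (Subalgebra.algebraMap_mem _ _) _))
                (Subalgebra.natCast_mem _ _)))
              (SetLike.le_def.mp le_sup_left (hmf))
          · have hmgle : mg ≤ mf + mg - k := by omega
            have : algebraMap R A f ^ k * algebraMap R A g ^ (mf + mg - k)
                * (mf + mg).choose k * a
                = (algebraMap R A f ^ k * algebraMap R A g ^ (mf + mg - k - mg)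
                    * (mf + mg).choose k) * (algebraMap R A g ^ mg * a) := by
              rw [show algebraMap R A g ^ (mf + mg - k)
                = algebraMap R A g ^ (mf + mg - k - mg) * algebraMap R A g ^ mg by
                  rw [← pow_add, Nat.sub_add_cancel hmgle]]
              ring
            rw [this]
            exact mul_mem (SetLike.le_def.mp le_sup_right (by
              exact Subalgebra.mul_mem _ (Subalgebra.mul_mem _
                (Subalgebra.pow_mem _ (Subalgebra.algebraMap_mem _ _) _)
                (Subalgebra.pow_mem _ (Subalgebra.algebraMap_mem _ _) _))
                (Subalgebra.natCast_mem _ _)))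
              (SetLike.le_def.mp le_sup_right (hmg))
      zero_mem' := ⟨⊥, Subalgebra.fg_bot, fun a =>
        ⟨1, by rw [map_zero, pow_one, zero_mul]; exact zero_mem _⟩⟩
      smul_mem' := by
        rintro r f ⟨Af, hAf, hf⟩
        refine ⟨Af, hAf, fun a => ?_⟩
        obtain ⟨m, hm⟩ := hf a
        refine ⟨m, ?_⟩
        rw [smul_eq_mul, _root_.map_mul, mul_pow, mul_assoc]
        exact mul_mem (Subalgebra.pow_mem _ (Subalgebra.algebraMap_mem _ _) _) hm } with hJ
  have hJtop : J = ⊤ := by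
    by_contra hne
    obtain ⟨𝔪, h𝔪, hle⟩ := Ideal.exists_le_maximal J hne
    obtain ⟨H, hHfg, hH⟩ := onoda_stepB hRA 𝔪 h𝔪 (hloc 𝔪 h𝔪)
    set A₀ : Subalgebra R A := A₁ ⊔ H with hA₀
    have hA₀fg : A₀.FG := by
      obtain ⟨s1, hs1⟩ := hA₁fg
      obtain ⟨s2, hs2⟩ := hHfg
      exact ⟨s1 ∪ s2, by rw [Finset.coe_union, Algebra.adjoin_union, hs1, hs2]⟩
    haveI : Algebra.FiniteType R A₀ := (Subalgebra.fg_iff_finiteType A₀).mp hA₀fg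
    haveI hNoeth : IsNoetherianRing A₀ := Algebra.FiniteType.isNoetherianRing R A₀
    obtain ⟨f, hfS, hf⟩ := onoda_key 𝔪.primeCompl A₀ hNoeth b
      (SetLike.le_def.mp le_sup_left hbA₁) hb
      (fun a => (hA₁ a).imp fun n hn => SetLike.le_def.mp le_sup_left hn)
      (fun a => (hH a).imp fun s hs => ⟨hs.1, SetLike.le_def.mp le_sup_right hs.2⟩)
    exact hfS (hle ⟨A₀, hA₀fg, hf⟩)
  have h1 : (1 : R) ∈ J := hJtop ▸ Submodule.mem_top
  obtain ⟨A₀, hA₀fg, hA₀⟩ := h1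
  have : A₀ = ⊤ := by
    rw [eq_top_iff]
    intro a _
    obtain ⟨m, hm⟩ := hA₀ a
    simpa using hm
  rw [this] at hA₀fg
  obtain ⟨t, ht⟩ := hA₀fg
  exact ⟨⟨t, ht⟩⟩
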